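/- Let G be a pro-p group, g₁, g₂ ∈ G, and suppose g₁^p = [g₁^p, g₂]. Then g₁^p = 1. -/

import Mathlib

/-- A profinite topological group all of whose open normal subgroups have
`p`-power index: a pro-`p` group. -/
def IsProP (p : ℕ) (G : Type) [Group G] [TopologicalSpace G]
    [IsTopologicalGroup G] : Prop :=
  CompactSpace G ∧ T2Space G ∧ TotallyDisconnectedSpace G ∧
    ∀ U : Subgroup G, U.Normal → IsOpen (U : Set G) → ∃ k : ℕ, U.index = p ^ k

open scoped commutatorElement

lemma aux_nilpotent_fix {Q : Type*} [Group Q] [Group.IsNilpotent Q] (x g : Q)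
    (h : x = ⁅x, g⁆) : x = 1 := by
  have key : ∀ n : ℕ, x ∈ (⊤ : Subgroup Q).lowerCentralSeries n := by
    intro n
    induction n with
    | zero => simp
    | succ n ih =>
      rw [lowerCentralSeries_succ, h]
      exact Subgroup.commutator_mem_commutator ih (Subgroup.mem_top g)
  have := key (Group.nilpotencyClass Q)
  rwa [lowerCentralSeries_nilpotencyClass, Subgroup.mem_bot] at this

/-- Let `G` be a pro-`p` group and `g₁ g₂ ∈ G` with `g₁^p = [g₁^p, g₂]`.
Then `g₁^p = 1`. -/
theorem stmt14 (p : ℕ) (hp : p.Prime) (G : Type) [Group G] [TopologicalSpace G]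
    [IsTopologicalGroup G] (hG : IsProP p G) (g₁ g₂ : G)
    (h : g₁ ^ p = ⁅g₁ ^ p, g₂⁆) : g₁ ^ p = 1 := by
  obtain ⟨hcomp, ht2, htd, hidx⟩ := hG
  set x := g₁ ^ p with hx
  by_contra hne
  -- {x}ᶜ is an open neighborhood of 1; find a clopen neighborhood inside it
  have hopen : IsOpen ({x}ᶜ : Set G) := isClosed_singleton.isOpen_compl
  have h1 : (1 : G) ∈ ({x}ᶜ : Set G) := by simpa using fun hxx => hne hxx.symm
  obtain ⟨W, ⟨hWclopen, hW1, hWsub⟩⟩ :=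
    (TopologicalSpace.IsTopologicalBasis.mem_nhds_iff isTopologicalBasis_isClopen).mp
      (hopen.mem_nhds h1)
  obtain ⟨H, hH⟩ := IsTopologicalGroup.exist_openNormalSubgroup_sub_clopen_nhds_of_one hWclopen hW1
  -- the quotient by H is a finite p-group
  obtain ⟨k, hk⟩ := hidx H.toSubgroup H.isNormal' H.isOpen'
  haveI : H.toSubgroup.FiniteIndex := ⟨by rw [hk]; exact pow_ne_zero k hp.ne_zero⟩
  haveI : Group.IsNilpotent (G ⧸ H.toSubgroup) := by
    have hcard : Nat.card (G ⧸ H.toSubgroup) = p ^ k := by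
      rw [← hk]; rfl
    haveI : Finite (G ⧸ H.toSubgroup) := Nat.finite_of_card_ne_zero (by
      rw [hcard]; exact pow_ne_zero k hp.ne_zero)
    haveI : Fact p.Prime := ⟨hp⟩
    exact (IsPGroup.of_card hcard).isNilpotent
  -- push the relation to the quotient
  have hq : (QuotientGroup.mk' H.toSubgroup) x = 1 := by
    apply aux_nilpotent_fix _ ((QuotientGroup.mk' H.toSubgroup) g₂)
    rw [← map_commutatorElement, ← h]
  have hxH : x ∈ H.toSubgroup := (QuotientGroup.eq_one_iff x).mp hq
  exact hWsub (hH hxH) rfl
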